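/- Let F : Γ₊ → ℝ be continuously differentiable, symmetric, concave and positively homogeneous of degree 1. Then for every κ ∈ Γ₊, writing F_i := ∂F/∂κ_i(κ), one has (∑_{j=1}^n κ_j)·(∑_{i=1}^n F_i·κ_i²) ≤ F(κ)·(∑_{j=1}^n κ_j²). (Equivalently, ∑_{i,j}(F_i κ_i² κ_j − F_i κ_i κ_j²) = ∑_{i<j} κ_i κ_j (κ_i − κ_j)(F_i − F_j) ≤ 0, using Euler's relation F(κ) = ∑_i F_i κ_i.) -/

import Mathlib

noncomputable section

/-- The open positive cone `Γ₊ ⊆ ℝⁿ`. -/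
def GammaPlus (n : ℕ) : Set (Fin n → ℝ) := {κ | ∀ i, 0 < κ i}

lemma isOpen_gammaPlus (n : ℕ) : IsOpen (GammaPlus n) := by
  have h : GammaPlus n = Set.pi Set.univ (fun _ => Set.Ioi (0:ℝ)) := by
    ext κ; simp [GammaPlus, Set.mem_pi]
  rw [h]
  exact isOpen_set_pi Set.finite_univ (fun i _ => isOpen_Ioi)

/-- directional derivative at κ in direction κ' - κ is nonneg when F κ' = F κ. -/
lemma dirderiv_nonneg {n : ℕ} {F : (Fin n → ℝ) → ℝ}
    (hreg : ContDiffOn ℝ 1 F (GammaPlus n))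
    (hconc : ConcaveOn ℝ (GammaPlus n) F) {κ κ' : Fin n → ℝ}
    (hκ : κ ∈ GammaPlus n) (hκ' : κ' ∈ GammaPlus n) (hF : F κ' = F κ) :
    0 ≤ fderiv ℝ F κ (κ' - κ) := by
  have hdiff : DifferentiableAt ℝ F κ :=
    (hreg.contDiffAt ((isOpen_gammaPlus n).mem_nhds hκ)).differentiableAt one_ne_zero
  have hdF : HasFDerivAt F (fderiv ℝ F κ) κ := hdiff.hasFDerivAt
  have hline : HasDerivAt (fun t : ℝ => κ + t • (κ' - κ)) (κ' - κ) 0 := by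
    simpa using ((hasDerivAt_id (0:ℝ)).smul_const (κ' - κ)).const_add κ
  have h0 : κ + (0:ℝ) • (κ' - κ) = κ := by simp
  have hφ : HasDerivAt (fun t : ℝ => F (κ + t • (κ' - κ))) (fderiv ℝ F κ (κ' - κ)) 0 := by
    have := HasFDerivAt.comp_hasDerivAt (0:ℝ) (h0 ▸ hdF) hline
    rw [h0] at this; exact this
  set φ : ℝ → ℝ := fun t => F (κ + t • (κ' - κ)) with hφdef
  have htend : Filter.Tendsto (slope φ 0) (nhdsWithin 0 (Set.Ioi 0))
      (nhds (fderiv ℝ F κ (κ' - κ))) := by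
    have h := (hasDerivAt_iff_tendsto_slope.mp hφ)
    exact h.mono_left (nhdsWithin_mono 0 (fun x hx => ne_of_gt hx))
  have hpos : ∀ᶠ t in nhdsWithin (0:ℝ) (Set.Ioi 0), 0 ≤ slope φ 0 t := by
    filter_upwards [Ioc_mem_nhdsGT_of_mem (by norm_num : (0:ℝ) ∈ Set.Ico (0:ℝ) 1)] with t ht
    obtain ⟨ht0, ht1⟩ := ht
    have hcc := hconc.2 hκ hκ' (by linarith : (0:ℝ) ≤ 1 - t) (le_of_lt ht0) (by ring)
    have hcomb : (1 - t) • κ + t • κ' = κ + t • (κ' - κ) := by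
      funext k
      simp [Pi.add_apply, Pi.smul_apply, smul_eq_mul]
      ring
    rw [hcomb, hF] at hcc
    have hnum : F κ ≤ φ t := by
      have : (1 - t) * F κ + t * F κ = F κ := by ring
      simpa [hφdef, this] using hcc
    have hφ0 : φ 0 = F κ := by simp [hφdef]
    rw [slope_def_field]
    rw [div_eq_mul_inv]
    have : 0 ≤ φ t - φ 0 := by rw [hφ0]; linarith
    have ht0' : (0:ℝ) ≤ (t - 0)⁻¹ := by rw [sub_zero]; exact le_of_lt (inv_pos.mpr ht0)
    exact mul_nonneg this ht0'
  exact ge_of_tendsto htend hpos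

lemma euler_relation {n : ℕ} {F : (Fin n → ℝ) → ℝ}
    (hreg : ContDiffOn ℝ 1 F (GammaPlus n))
    (hhom : ∀ κ ∈ GammaPlus n, ∀ c : ℝ, 0 < c → F (c • κ) = c * F κ)
    {κ : Fin n → ℝ} (hκ : κ ∈ GammaPlus n) :
    fderiv ℝ F κ κ = F κ := by
  have hdiff : DifferentiableAt ℝ F κ :=
    (hreg.contDiffAt ((isOpen_gammaPlus n).mem_nhds hκ)).differentiableAt one_ne_zero
  have hdF : HasFDerivAt F (fderiv ℝ F κ) κ := hdiff.hasFDerivAt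
  have hline : HasDerivAt (fun c : ℝ => c • κ) κ 1 := by
    simpa using (hasDerivAt_id (1:ℝ)).smul_const κ
  have h1 : (1:ℝ) • κ = κ := one_smul _ _
  have hg : HasDerivAt (fun c : ℝ => F (c • κ)) (fderiv ℝ F κ κ) 1 := by
    have := HasFDerivAt.comp_hasDerivAt (1:ℝ) (h1 ▸ hdF) hline
    rw [h1] at this; exact this
  have heq : (fun c : ℝ => F (c • κ)) =ᶠ[nhds (1:ℝ)] fun c => c * F κ := by
    filter_upwards [isOpen_Ioi.mem_nhds (show (0:ℝ) < 1 by norm_num)] with c hc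
    exact hhom κ hκ c hc
  have hg2 : HasDerivAt (fun c : ℝ => F (c • κ)) (F κ) 1 :=
    (hasDerivAt_mul_const (F κ)).congr_of_eventuallyEq heq
  exact hg.unique hg2

/-- for a symmetric, concave, 1-homogeneous `C¹` curvature function `F`
on `Γ₊`, writing `F_i = ∂F/∂κ_i(κ)`, one has
`(∑ⱼ κⱼ)·(∑ᵢ Fᵢ κᵢ²) ≤ F(κ)·(∑ⱼ κⱼ²)`. -/
theorem concave_curvature_function_weighted_inequality (n : ℕ) (F : (Fin n → ℝ) → ℝ)
    (hreg : ContDiffOn ℝ 1 F (GammaPlus n))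
    (hsym : ∀ π : Equiv.Perm (Fin n), ∀ κ ∈ GammaPlus n, F (κ ∘ π) = F κ)
    (hconc : ConcaveOn ℝ (GammaPlus n) F)
    (hhom : ∀ κ ∈ GammaPlus n, ∀ c : ℝ, 0 < c → F (c • κ) = c * F κ) :
    ∀ κ ∈ GammaPlus n,
      (∑ j, κ j) * (∑ i, fderiv ℝ F κ (Pi.single i 1) * (κ i) ^ 2) ≤
        F κ * ∑ j, (κ j) ^ 2 := by
  intro κ hκ
  set L := fderiv ℝ F κ with hL
  set Fi : Fin n → ℝ := fun i => L (Pi.single i 1) with hFi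
  have hsingle : ∀ (i : Fin n) (c : ℝ), (Pi.single i c : Fin n → ℝ) = c • (Pi.single i 1 : Fin n → ℝ) := by
    intro i c
    rw [← Pi.single_smul, smul_eq_mul, mul_one]
  -- Euler: F κ = ∑ i, Fi i * κ i
  have hκsum : (∑ i, (κ i) • (Pi.single i (1:ℝ) : Fin n → ℝ)) = κ := by
    simp_rw [← hsingle]
    exact Finset.univ_sum_single κ
  have hLκ : L κ = ∑ i, Fi i * κ i := by
    conv_lhs => rw [← hκsum]
    rw [map_sum]
    simp only [map_smul, smul_eq_mul]
    exact Finset.sum_congr rfl fun i _ => mul_comm _ _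
  have heuler : F κ = ∑ i, Fi i * κ i := by
    rw [← hLκ, hL, euler_relation hreg hhom hκ]
  -- key: (κ i - κ j) * (Fi i - Fi j) ≤ 0
  have key : ∀ i j : Fin n, (κ i - κ j) * (Fi i - Fi j) ≤ 0 := by
    intro i j
    rcases eq_or_ne i j with h | hij
    · simp [h]
    · set κ' : Fin n → ℝ := κ ∘ (Equiv.swap i j) with hκ'
      have hκ'mem : κ' ∈ GammaPlus n := fun k => hκ _
      have hFκ' : F κ' = F κ := hsym (Equiv.swap i j) κ hκ
      have hdir := dirderiv_nonneg hreg hconc hκ hκ'mem hFκ'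
      have hdiffeq : κ' - κ = Pi.single i (κ j - κ i) + Pi.single j (κ i - κ j) := by
        funext k
        rcases eq_or_ne k i with hk | hk
        · subst hk
          simp [hκ', Equiv.swap_apply_left, Pi.single_apply, hij, Ne.symm hij]
        · rcases eq_or_ne k j with hk' | hk'
          · subst hk'
            simp [hκ', Equiv.swap_apply_right, Pi.single_apply, hij, Ne.symm hij]
          · simp [hκ', Equiv.swap_apply_of_ne_of_ne hk hk', Pi.single_apply, hk, hk']
      rw [hdiffeq] at hdir
      rw [map_add, hsingle i, hsingle j, map_smul, map_smul] at hdir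
      simp only [smul_eq_mul, ← hFi] at hdir
      nlinarith [hdir]
  -- summation algebra
  have e1 : (∑ j, κ j) * (∑ i, Fi i * κ i ^ 2) = ∑ i, ∑ j, Fi i * κ i ^ 2 * κ j := by
    rw [Finset.sum_mul_sum, Finset.sum_comm]
    exact Finset.sum_congr rfl fun i _ => Finset.sum_congr rfl fun j _ => by ring
  have e2 : (∑ i, Fi i * κ i) * (∑ j, κ j ^ 2) = ∑ i, ∑ j, Fi i * κ i * κ j ^ 2 := by
    rw [Finset.sum_mul_sum]
  set f : Fin n → Fin n → ℝ := fun i j => Fi i * κ i ^ 2 * κ j - Fi i * κ i * κ j ^ 2 with hf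
  have hD : (∑ i, ∑ j, f i j) = ∑ i, ∑ j, f j i := Finset.sum_comm
  have h2D : (∑ i, ∑ j, f i j) + (∑ i, ∑ j, f i j) = ∑ i, ∑ j, (f i j + f j i) := by
    nth_rewrite 1 [hD]
    rw [← Finset.sum_add_distrib]
    refine Finset.sum_congr rfl fun i _ => ?_
    rw [← Finset.sum_add_distrib]
    exact Finset.sum_congr rfl fun j _ => by ring
  have hterm : ∀ i j : Fin n, f i j + f j i ≤ 0 := by
    intro i j
    have h1 : f i j + f j i = (κ i * κ j) * ((κ i - κ j) * (Fi i - Fi j)) := by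
      simp only [hf]; ring
    rw [h1]
    exact mul_nonpos_of_nonneg_of_nonpos (le_of_lt (mul_pos (hκ i) (hκ j))) (key i j)
  have hDle : (∑ i, ∑ j, f i j) ≤ 0 := by
    have : (∑ i, ∑ j, (f i j + f j i)) ≤ 0 :=
      Finset.sum_nonpos fun i _ => Finset.sum_nonpos fun j _ => hterm i j
    linarith [h2D ▸ this]
  have hsplit : (∑ i, ∑ j, f i j)
      = (∑ i, ∑ j, Fi i * κ i ^ 2 * κ j) - (∑ i, ∑ j, Fi i * κ i * κ j ^ 2) := by
    rw [← Finset.sum_sub_distrib]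
    refine Finset.sum_congr rfl fun i _ => ?_
    rw [← Finset.sum_sub_distrib]
  rw [heuler]
  linarith [e1, e2, hsplit, hDle]
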